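/- (Step 2 of Lemma 1.) Adding extra arrivals to a single server's arrival schedule never decreases its admitted throughput: if the schedule L' (arrival gaps, rewards, and cost rates) is obtained from the schedule L by deleting some subset of the customers (keeping arrival times, rewards, and costs of the remaining customers unchanged), then the total number of customers admitted by the single server under schedule L is at least the total number admitted under schedule L'. -/

import Mathlib

private lemma max_add_le_aux {x y c : ℝ} (hc : 0 ≤ c) : max (x + c) y ≤ max x y + c := by
  apply max_le
  · exact add_le_add_left (le_max_left x y) c
  · exact le_add_of_le_of_nonneg (le_max_right x y) hc

private lemma max_sub_aux (u v d : ℝ) (hd : 0 ≤ d) : max (max u v - d) v = max (u - d) v := by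
  rw [← max_sub_sub_right u v d, max_assoc, max_eq_right (by linarith : v - d ≤ v)]

/-- Step 2 of Lemma 1: for a single server with balking, adding extra arrivals
to the arrival schedule never decreases the admitted throughput.  The schedule
`L'` (customers `s 1 < s 2 < … < s n'` selected from `L`'s customers
`1, …, n`, keeping their arrival times `t`, rewards `R`, and cost rates `c`)
admits at most as many customers as the full schedule `L`. -/
theorem throughput_monotone_under_insertion
    (μ : ℝ) (hμ : 0 < μ)
    (n n' : ℕ) (t R c : ℕ → ℝ)
    (ht0 : t 0 = 0) (htmono : Monotone t) (hc : ∀ k, 0 ≤ c k)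
    (s : ℕ → ℕ) (hs : StrictMono s) (hs0 : s 0 = 0) (hsle : s n' ≤ n)
    (F G : ℕ → ℝ) (A : ℕ → Prop) [DecidablePred A]
    (F' G' : ℕ → ℝ) (A' : ℕ → Prop) [DecidablePred A']
    (hF0 : F 0 = 1 / μ)
    (hG : ∀ k, G (k + 1) = max (F k - (t (k + 1) - t k)) (1 / μ))
    (hA : ∀ k, A (k + 1) ↔ 0 < R (k + 1) - c (k + 1) * G (k + 1))
    (hF : ∀ k, F (k + 1) = if A (k + 1) then G (k + 1) + 1 / μ else G (k + 1))
    (hF'0 : F' 0 = 1 / μ)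
    (hG' : ∀ k, G' (k + 1) = max (F' k - (t (s (k + 1)) - t (s k))) (1 / μ))
    (hA' : ∀ k, A' (k + 1) ↔ 0 < R (s (k + 1)) - c (s (k + 1)) * G' (k + 1))
    (hF' : ∀ k, F' (k + 1) =
      if A' (k + 1) then G' (k + 1) + 1 / μ else G' (k + 1)) :
    ((Finset.Icc 1 n').filter A').card ≤ ((Finset.Icc 1 n).filter A).card := by
  set N : ℕ → ℕ := fun m => ((Finset.Icc 1 m).filter A).card with hNdef
  set N' : ℕ → ℕ := fun m => ((Finset.Icc 1 m).filter A').card with hN'def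
  have hN0 : N 0 = 0 := by simp [hNdef]
  have hN'0 : N' 0 = 0 := by simp [hN'def]
  have hNsucc : ∀ m, N (m + 1) = N m + (if A (m + 1) then 1 else 0) := by
    intro m
    have hins : (m + 1) ∉ Finset.Icc 1 m := by simp
    rw [hNdef]
    simp only
    rw [← Finset.insert_Icc_right_eq_Icc_add_one (Nat.le_add_left 1 m), Finset.filter_insert]
    by_cases h : A (m + 1)
    · rw [if_pos h, Finset.card_insert_of_notMem (fun hmem => hins (Finset.filter_subset _ _ hmem)), if_pos h]
    · rw [if_neg h, if_neg h, add_zero]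
  have hN'succ : ∀ m, N' (m + 1) = N' m + (if A' (m + 1) then 1 else 0) := by
    intro m
    have hins : (m + 1) ∉ Finset.Icc 1 m := by simp
    rw [hN'def]
    simp only
    rw [← Finset.insert_Icc_right_eq_Icc_add_one (Nat.le_add_left 1 m), Finset.filter_insert]
    by_cases h : A' (m + 1)
    · rw [if_pos h, Finset.card_insert_of_notMem (fun hmem => hins (Finset.filter_subset _ _ hmem)), if_pos h]
    · rw [if_neg h, if_neg h, add_zero]
  have hNmono : ∀ a b : ℕ, a ≤ b → N a ≤ N b := fun a b h =>
    Finset.card_le_card (Finset.filter_subset_filter _ (Finset.Icc_subset_Icc_right h))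
  have hμ' : 0 < 1 / μ := by positivity
  -- decay bound within the full schedule
  have hdecay : ∀ a m : ℕ, a ≤ m →
      F m ≤ max (F a - (t m - t a)) (1 / μ) + ((N m : ℝ) - (N a : ℝ)) / μ := by
    intro a m ham
    induction m, ham using Nat.le_induction with
    | base => simp [le_max_left]
    | succ m ham ih =>
      have hΔ : 0 ≤ t (m + 1) - t m := by
        have := htmono (Nat.le_succ m); linarith
      have hcN : 0 ≤ ((N m : ℝ) - (N a : ℝ)) / μ := by
        have h1 : (N a : ℝ) ≤ N m := by exact_mod_cast hNmono a m ham
        exact div_nonneg (by linarith) hμ.le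
      have hG1 : G (m + 1) ≤ max (F a - (t (m + 1) - t a)) (1 / μ)
          + ((N m : ℝ) - (N a : ℝ)) / μ := by
        rw [hG m]
        calc max (F m - (t (m + 1) - t m)) (1 / μ)
            ≤ max ((max (F a - (t m - t a)) (1 / μ) - (t (m + 1) - t m))
                + ((N m : ℝ) - (N a : ℝ)) / μ) (1 / μ) := by
              apply max_le_max _ le_rfl
              linarith [ih]
          _ ≤ max (max (F a - (t m - t a)) (1 / μ) - (t (m + 1) - t m)) (1 / μ)
                + ((N m : ℝ) - (N a : ℝ)) / μ := max_add_le_aux hcN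
          _ = max (F a - (t m - t a) - (t (m + 1) - t m)) (1 / μ)
                + ((N m : ℝ) - (N a : ℝ)) / μ := by
              rw [max_sub_aux _ _ _ hΔ]
          _ = max (F a - (t (m + 1) - t a)) (1 / μ)
                + ((N m : ℝ) - (N a : ℝ)) / μ := by ring_nf
      rw [hF m, hNsucc m]
      by_cases h : A (m + 1)
      · rw [if_pos h, if_pos h]
        push_cast
        have e : ((N m : ℝ) + 1 - N a) / μ = ((N m : ℝ) - N a) / μ + 1 / μ := by ring
        rw [e]; linarith
      · rw [if_neg h, if_neg h]
        push_cast
        have e : ((N m : ℝ) + 0 - N a) / μ = ((N m : ℝ) - N a) / μ := by ring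
        rw [e]; exact hG1
  -- main invariant along the subsequence
  have hmain : ∀ k : ℕ, N' k ≤ N (s k) ∧
      F (s k) ≤ F' k + ((N (s k) : ℝ) - (N' k : ℝ)) / μ := by
    intro k
    induction k with
    | zero =>
      constructor
      · rw [hs0, hN'0]; exact Nat.zero_le _
      · rw [hs0, hN'0, hN0, hF0, hF'0]; simp
    | succ k ih =>
      obtain ⟨ihN, ihF⟩ := ih
      obtain ⟨p, hp⟩ : ∃ p, s (k + 1) = p + 1 := by
        have : s k < s (k + 1) := hs (Nat.lt_succ_self k)
        exact ⟨s (k + 1) - 1, by omega⟩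
      have hskp : s k ≤ p := by
        have : s k < s (k + 1) := hs (Nat.lt_succ_self k)
        omega
      have hNcast : (N' k : ℝ) ≤ N (s k) := by exact_mod_cast ihN
      have hNp : (N (s k) : ℝ) ≤ N p := by exact_mod_cast hNmono _ _ hskp
      have hD : 0 ≤ ((N (s k) : ℝ) - (N' k : ℝ)) / μ := div_nonneg (by linarith) hμ.le
      have hΔ : 0 ≤ t (p + 1) - t p := by have := htmono (Nat.le_succ p); linarith
      have hcN : 0 ≤ ((N p : ℝ) - (N (s k) : ℝ)) / μ := div_nonneg (by linarith) hμ.le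
      have hNpk : N (s k) ≤ N p := hNmono _ _ hskp
      -- the key bound on G
      have hGkey : G (p + 1) ≤ G' (k + 1) + ((N p : ℝ) - (N' k : ℝ)) / μ := by
        rw [hG p, hG' k, hp]
        have h1 := hdecay (s k) p hskp
        calc max (F p - (t (p + 1) - t p)) (1 / μ)
            ≤ max ((max (F (s k) - (t p - t (s k))) (1 / μ) - (t (p + 1) - t p))
                + ((N p : ℝ) - (N (s k) : ℝ)) / μ) (1 / μ) := by
              apply max_le_max _ le_rfl; linarith
          _ ≤ max (max (F (s k) - (t p - t (s k))) (1 / μ) - (t (p + 1) - t p)) (1 / μ)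
                + ((N p : ℝ) - (N (s k) : ℝ)) / μ := max_add_le_aux hcN
          _ = max (F (s k) - (t (p + 1) - t (s k))) (1 / μ)
                + ((N p : ℝ) - (N (s k) : ℝ)) / μ := by
              rw [max_sub_aux _ _ _ hΔ]; ring_nf
          _ ≤ max ((F' k - (t (p + 1) - t (s k)))
                + ((N (s k) : ℝ) - (N' k : ℝ)) / μ) (1 / μ)
                + ((N p : ℝ) - (N (s k) : ℝ)) / μ := by
              apply add_le_add_left; apply max_le_max _ le_rfl; linarith
          _ ≤ max (F' k - (t (p + 1) - t (s k))) (1 / μ)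
                + ((N (s k) : ℝ) - (N' k : ℝ)) / μ
                + ((N p : ℝ) - (N (s k) : ℝ)) / μ :=
              add_le_add_left (max_add_le_aux hD) _
          _ = max (F' k - (t (p + 1) - t (s k))) (1 / μ)
                + ((N p : ℝ) - (N' k : ℝ)) / μ := by ring
      have hAk' := hA' k
      rw [hp] at hAk'
      rw [hp, hNsucc p, hN'succ k, hF p, hF' k]
      by_cases hA1 : A (p + 1) <;> by_cases hA'1 : A' (k + 1)
      · rw [if_pos hA1, if_pos hA'1, if_pos hA1, if_pos hA'1]
        refine ⟨by omega, ?_⟩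
        push_cast
        have e : ((N p : ℝ) + 1 - ((N' k : ℝ) + 1)) / μ = ((N p : ℝ) - N' k) / μ := by ring
        rw [e]; linarith
      · rw [if_pos hA1, if_neg hA'1, if_pos hA1, if_neg hA'1]
        refine ⟨by omega, ?_⟩
        push_cast
        have e : ((N p : ℝ) + 1 - ((N' k : ℝ) + 0)) / μ
            = ((N p : ℝ) - N' k) / μ + 1 / μ := by ring
        rw [e]; linarith
      · -- full balks, sparse admits : need strict slack
        have hbalk : R (p + 1) - c (p + 1) * G (p + 1) ≤ 0 := by
          by_contra h; exact hA1 ((hA p).mpr (by linarith))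
        have hadmit : 0 < R (p + 1) - c (p + 1) * G' (k + 1) := hAk'.mp hA'1
        have hGlt : G' (k + 1) < G (p + 1) := by
          by_contra h
          push_neg at h
          have hcnn := hc (p + 1)
          nlinarith
        have hslack : (N' k : ℝ) < N p := by
          have h2 : 0 < ((N p : ℝ) - (N' k : ℝ)) / μ := by linarith
          have h3 := div_mul_cancel₀ ((N p : ℝ) - (N' k : ℝ)) (ne_of_gt hμ)
          nlinarith [mul_pos h2 hμ]
        have hslackN : N' k + 1 ≤ N p := by exact_mod_cast hslack
        rw [if_neg hA1, if_pos hA'1, if_neg hA1, if_pos hA'1]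
        refine ⟨by omega, ?_⟩
        push_cast
        have e : ((N p : ℝ) + 0 - ((N' k : ℝ) + 1)) / μ
            = ((N p : ℝ) - N' k) / μ - 1 / μ := by ring
        rw [e]; linarith
      · rw [if_neg hA1, if_neg hA'1, if_neg hA1, if_neg hA'1]
        refine ⟨by omega, ?_⟩
        push_cast
        have e : ((N p : ℝ) + 0 - ((N' k : ℝ) + 0)) / μ = ((N p : ℝ) - N' k) / μ := by ring
        rw [e]; linarith
  calc ((Finset.Icc 1 n').filter A').card = N' n' := rfl
    _ ≤ N (s n') := (hmain n').1
    _ ≤ N n := hNmono _ _ hsle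
    _ = ((Finset.Icc 1 n).filter A).card := rfl
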